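/- Let A ∈ ℂ^{m×n×p} and W ∈ ℂ^{n×m×p} with rank_M(W *_M A) = rank_M(W) ≤ rank_M(A), and let X be an outer inverse of A with R_M(X) = R_M(W) and N_M(X) = N_M(W). Let γ ∈ ℂ and define Z₀ = γ·W and Z_{j+1} = Z_j *_M Σ_{k=0}^{18} (I_M − A *_M Z_j)^k. Then for every j ≥ 0, ‖mat(X − Z_{j+1})‖_F ≤ ‖mat(X)‖_F · ‖mat(A)‖_F^{19} · ‖mat(X − Z_j)‖_F^{19}; i.e., the iteration has (at least) nineteenth order of convergence to X. -/

import Mathlib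

open Matrix Finset

/-- A third-order tensor in `ℂ^{m×n×p}`, given by its `p` frontal slices. -/
abbrev Tensor (m n p : ℕ) := Fin p → Matrix (Fin m) (Fin n) ℂ

/-- The transform `Â = A ×₃ M` (mode-3 product with `M`). -/
noncomputable def hatT {m n p : ℕ} (M : Matrix (Fin p) (Fin p) ℂ) (A : Tensor m n p) :
    Tensor m n p :=
  fun l => ∑ s, M l s • A s

/-- `mat(A)`: the block-diagonal matrix whose blocks are frontal slices of `A ×₃ M`. -/
noncomputable def matT {m n p : ℕ} (M : Matrix (Fin p) (Fin p) ℂ) (A : Tensor m n p) :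
    Matrix (Fin m × Fin p) (Fin n × Fin p) ℂ :=
  Matrix.blockDiagonal (hatT M A)

/-- The M-product `A *_M B`, determined by `mat(A *_M B) = mat(A)·mat(B)`. -/
noncomputable def mprod {m n k p : ℕ} (M : Matrix (Fin p) (Fin p) ℂ)
    (A : Tensor m n p) (B : Tensor n k p) : Tensor m k p :=
  fun l => ∑ s, M⁻¹ l s • (hatT M A s * hatT M B s)

/-- The conjugate transpose `A^*`, determined by `mat(A^*) = mat(A)^*`. -/
noncomputable def mstar {m n p : ℕ} (M : Matrix (Fin p) (Fin p) ℂ) (A : Tensor m n p) :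
    Tensor n m p :=
  fun l => ∑ s, M⁻¹ l s • (hatT M A s)ᴴ

/-- The identity tensor `I_M ∈ ℂ^{m×m×p}`, determined by `mat(I_M) = I`. -/
noncomputable def idT {p : ℕ} (M : Matrix (Fin p) (Fin p) ℂ) (m : ℕ) : Tensor m m p :=
  fun l => ∑ s, M⁻¹ l s • (1 : Matrix (Fin m) (Fin m) ℂ)

/-- M-product powers of a square tensor. -/
noncomputable def mpow {m p : ℕ} (M : Matrix (Fin p) (Fin p) ℂ) (A : Tensor m m p) :
    ℕ → Tensor m m p
  | 0 => idT M m
  | k + 1 => mprod M A (mpow M A k)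

/-- `R_M(A)`: the column space of `mat(A)`. -/
noncomputable def rangeM {m n p : ℕ} (M : Matrix (Fin p) (Fin p) ℂ) (A : Tensor m n p) :
    Submodule ℂ (Fin m × Fin p → ℂ) :=
  LinearMap.range (matT M A).mulVecLin

/-- `N_M(A)`: the kernel of `mat(A)`. -/
noncomputable def kerM {m n p : ℕ} (M : Matrix (Fin p) (Fin p) ℂ) (A : Tensor m n p) :
    Submodule ℂ (Fin n × Fin p → ℂ) :=
  LinearMap.ker (matT M A).mulVecLin

/-- `rank_M(A) = rank(mat(A))`. -/
noncomputable def rankM {m n p : ℕ} (M : Matrix (Fin p) (Fin p) ℂ) (A : Tensor m n p) : ℕ :=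
  (matT M A).rank

/-- The first `s` lateral slices `Q(:,1:s,:)`. -/
def latSlice {n s p : ℕ} (hsn : s ≤ n) (Q : Tensor n n p) : Tensor n s p :=
  fun l => (Q l).submatrix id (Fin.castLE hsn)

/-- The first `s` horizontal slices `R(1:s,:,:)`. -/
def horSlice {n m s p : ℕ} (hsn : s ≤ n) (R : Tensor n m p) : Tensor s m p :=
  fun l => (R l).submatrix (Fin.castLE hsn) id

/-- Frobenius norm of a complex matrix. -/
noncomputable def frobNorm {α β : Type*} [Fintype α] [Fintype β] (X : Matrix α β ℂ) : ℝ :=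
  Real.sqrt (∑ i, ∑ j, ‖X i j‖ ^ 2)

attribute [local instance] Matrix.frobeniusSeminormedAddCommGroup

lemma frobNorm_eq {α β : Type*} [Fintype α] [Fintype β] (X : Matrix α β ℂ) :
    frobNorm X = ‖X‖ := by
  rw [frobNorm, Matrix.frobenius_norm_def, ← Real.sqrt_eq_rpow]
  congr 1
  refine Finset.sum_congr rfl fun i _ => Finset.sum_congr rfl fun j _ => ?_
  rw [← Real.rpow_natCast ‖X i j‖ 2]; norm_num

section lems

variable {m n k p : ℕ} (M : Matrix (Fin p) (Fin p) ℂ)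

lemma hatT_unhat (hM : IsUnit M.det) (C : Fin p → Matrix (Fin m) (Fin n) ℂ) (l : Fin p) :
    hatT M (fun s => ∑ t, M⁻¹ s t • C t) l = C l := by
  have h1 : M * M⁻¹ = 1 := Matrix.mul_nonsing_inv M hM
  have key : ∀ t, (∑ s, M l s * M⁻¹ s t) = if t = l then 1 else 0 := by
    intro t
    have h2 : (M * M⁻¹) l t = (1 : Matrix (Fin p) (Fin p) ℂ) l t := by rw [h1]
    rw [Matrix.mul_apply] at h2
    rw [h2, Matrix.one_apply]
    simp [eq_comm]
  calc hatT M (fun s => ∑ t, M⁻¹ s t • C t) l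
      = ∑ t, (∑ s, M l s * M⁻¹ s t) • C t := by
        simp only [hatT, Finset.smul_sum, smul_smul]
        rw [Finset.sum_comm]
        simp only [Finset.sum_smul]
    _ = C l := by
        simp only [key, ite_smul, one_smul, zero_smul]
        simp

lemma hatT_mprod (hM : IsUnit M.det) (A : Tensor m n p) (B : Tensor n k p) (l : Fin p) :
    hatT M (mprod M A B) l = hatT M A l * hatT M B l := by
  have := hatT_unhat M hM (fun t => hatT M A t * hatT M B t) l
  exact this

lemma matT_mprod (hM : IsUnit M.det) (A : Tensor m n p) (B : Tensor n k p) :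
    matT M (mprod M A B) = matT M A * matT M B := by
  have h : hatT M (mprod M A B) = fun l => hatT M A l * hatT M B l :=
    funext (hatT_mprod M hM A B)
  rw [matT, h, Matrix.blockDiagonal_mul, matT, matT]

lemma matT_idT (hM : IsUnit M.det) : matT M (idT M m) = 1 := by
  rw [matT]
  have : hatT M (idT M m) = fun _ => (1 : Matrix (Fin m) (Fin m) ℂ) := by
    funext l
    exact hatT_unhat M hM (fun _ => 1) l
  rw [this]
  exact Matrix.blockDiagonal_one

lemma hatT_add (A B : Tensor m n p) : hatT M (A + B) = hatT M A + hatT M B := by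
  funext l
  simp [hatT, smul_add, Finset.sum_add_distrib]

lemma matT_add (A B : Tensor m n p) : matT M (A + B) = matT M A + matT M B := by
  rw [matT, matT, matT, hatT_add, Matrix.blockDiagonal_add]

lemma matT_sub (A B : Tensor m n p) : matT M (A - B) = matT M A - matT M B := by
  have : hatT M (A - B) = hatT M A - hatT M B := by
    funext l; simp [hatT, smul_sub, Finset.sum_sub_distrib]
  rw [matT, matT, matT, this, Matrix.blockDiagonal_sub]

lemma matT_smul (γ : ℂ) (A : Tensor m n p) : matT M (γ • A) = γ • matT M A := by
  have : hatT M (γ • A) = γ • hatT M A := by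
    funext l
    simp [hatT, Finset.smul_sum, smul_comm γ]
  rw [matT, matT, this, Matrix.blockDiagonal_smul]

lemma matT_sum (F : ℕ → Tensor m n p) (s : Finset ℕ) :
    matT M (∑ j ∈ s, F j) = ∑ j ∈ s, matT M (F j) := by
  classical
  induction s using Finset.induction with
  | empty =>
      simp only [Finset.sum_empty]
      have : hatT M (0 : Tensor m n p) = 0 := by funext l; simp [hatT]
      rw [matT, this, Matrix.blockDiagonal_zero]
  | insert a s h ih => rw [Finset.sum_insert h, Finset.sum_insert h, matT_add, ih]

lemma matT_mpow (hM : IsUnit M.det) (A : Tensor m m p) (j : ℕ) :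
    matT M (mpow M A j) = (matT M A) ^ j := by
  induction j with
  | zero => exact matT_idT M hM
  | succ j ih => rw [mpow, matT_mprod M hM, ih, pow_succ']


end lems

section mats

set_option linter.unusedSectionVars false
variable {I J : Type*} [Fintype I] [Fintype J] [DecidableEq I] [DecidableEq J]

lemma eq_of_mulVec_eq {P Q : Matrix I J ℂ} (h : ∀ v, P *ᵥ v = Q *ᵥ v) : P = Q := by
  ext i j
  have := congrFun (h (Pi.single j 1)) i
  simpa using this

lemma comm_pow_one_sub {R : Type*} [Ring R] (T : R) (k : ℕ) :
    T * (1 - T) ^ k = (1 - T) ^ k * T :=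
  (((Commute.one_right T).sub_right (Commute.refl T)).pow_right k).eq

lemma geom_sum_mul_tel {R : Type*} [Ring R] (T : R) (K : ℕ) :
    T * ∑ k ∈ Finset.range K, (1 - T) ^ k = 1 - (1 - T) ^ K := by
  induction K with
  | zero => simp
  | succ K ih =>
    rw [Finset.sum_range_succ, mul_add, ih, pow_succ, comm_pow_one_sub]
    noncomm_ring

lemma shift_pow (Z : Matrix I J ℂ) (A : Matrix J I ℂ) (k : ℕ) :
    Z * (1 - A * Z) ^ k = (1 - Z * A) ^ k * Z := by
  have base : Z * (1 - A * Z) = (1 - Z * A) * Z := by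
    rw [Matrix.mul_sub, Matrix.sub_mul, Matrix.mul_one, Matrix.one_mul, Matrix.mul_assoc]
  induction k with
  | zero => rw [pow_zero, pow_zero, Matrix.mul_one, Matrix.one_mul]
  | succ k ih =>
    rw [pow_succ', ← Matrix.mul_assoc, base, Matrix.mul_assoc, ih, pow_succ',
      Matrix.mul_assoc]

lemma shift_sum (Z : Matrix I J ℂ) (A : Matrix J I ℂ) (K : ℕ) :
    Z * ∑ k ∈ Finset.range K, (1 - A * Z) ^ k
      = (∑ k ∈ Finset.range K, (1 - Z * A) ^ k) * Z := by
  rw [Matrix.mul_sum, Matrix.sum_mul]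
  exact Finset.sum_congr rfl fun k _ => shift_pow Z A k

lemma key_identity (A : Matrix J I ℂ) (X Z : Matrix I J ℂ)
    (hXAX : X * (A * X) = X) (hXAZ : X * (A * Z) = Z) (hZAX : Z * (A * X) = Z) :
    X - Z * (∑ k ∈ Finset.range 19, (1 - A * Z) ^ k) = X * (A * (X - Z)) ^ 19 := by
  set T := A * Z with hT
  set S := ∑ k ∈ Finset.range 19, (1 - T) ^ k with hS
  have hTS : T * S = 1 - (1 - T) ^ 19 := geom_sum_mul_tel T 19
  have step1 : X - Z * S = X * (1 - T) ^ 19 := by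
    calc X - Z * S = X - (X * T) * S := by rw [hXAZ]
      _ = X - X * (T * S) := by rw [Matrix.mul_assoc]
      _ = X - X * (1 - (1 - T) ^ 19) := by rw [hTS]
      _ = X - (X - X * (1 - T) ^ 19) := by rw [Matrix.mul_sub, Matrix.mul_one]
      _ = X * (1 - T) ^ 19 := sub_sub_cancel _ _
  set P := 1 - A * X with hP
  set Q := A * (X - Z) with hQ
  have hPQ : 1 - T = P + Q := by
    rw [hP, hQ, hT, Matrix.mul_sub]
    abel
  have hXP : X * P = 0 := by rw [hP, Matrix.mul_sub, Matrix.mul_one, hXAX, sub_self]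
  have hEP : (X - Z) * P = 0 := by
    rw [hP, Matrix.mul_sub, Matrix.mul_one, Matrix.sub_mul, hXAX, hZAX, sub_self]
  have main : ∀ k : ℕ, X * (P + Q) ^ k = X * Q ^ k ∧ (X * Q ^ k) * P = 0 := by
    intro k
    induction k with
    | zero =>
      refine ⟨rfl, ?_⟩
      rw [pow_zero, Matrix.mul_one, hXP]
    | succ k ih =>
      have hQP : Q * P = 0 := by rw [hQ, Matrix.mul_assoc, hEP, Matrix.mul_zero]
      constructor
      · rw [pow_succ, pow_succ, ← Matrix.mul_assoc, ← Matrix.mul_assoc, ih.1, Matrix.mul_add,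
          ih.2, zero_add]
      · rw [pow_succ, ← Matrix.mul_assoc, Matrix.mul_assoc (X * Q ^ k) Q P, hQP,
          Matrix.mul_zero]
  rw [step1, hPQ, (main 19).1]

lemma pow_norm_le_pow (B : Matrix I I ℂ) : ‖B ^ 19‖ ≤ ‖B‖ ^ 19 := by
  have : ∀ k : ℕ, ‖B ^ (k + 1)‖ ≤ ‖B‖ ^ (k + 1) := by
    intro k
    induction k with
    | zero => simp
    | succ k ih =>
      calc ‖B ^ (k + 1 + 1)‖ = ‖B ^ (k + 1) * B‖ := by rw [pow_succ]
        _ ≤ ‖B ^ (k + 1)‖ * ‖B‖ := Matrix.frobenius_norm_mul _ _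
        _ ≤ ‖B‖ ^ (k + 1) * ‖B‖ := mul_le_mul_of_nonneg_right ih (norm_nonneg _)
        _ = ‖B‖ ^ (k + 1 + 1) := by ring
  simpa using this 18


end mats

/-- Nineteenth order of convergence of M-HPI19: the error at step `j+1` is bounded by a
constant times the 19th power of the error at step `j`. -/
theorem hpi19_nineteenth_order {m n p : ℕ}
    (M : Matrix (Fin p) (Fin p) ℂ) (hM : IsUnit M.det)
    (A : Tensor m n p) (W X : Tensor n m p)
    (hr1 : rankM M (mprod M W A) = rankM M W) (hr2 : rankM M W ≤ rankM M A)
    (hout : mprod M X (mprod M A X) = X)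
    (hRX : rangeM M X = rangeM M W) (hNX : kerM M X = kerM M W)
    (γ : ℂ) (Z : ℕ → Tensor n m p)
    (hZ0 : Z 0 = γ • W)
    (hZ : ∀ j, Z (j + 1) =
      mprod M (Z j) (∑ k ∈ Finset.range 19, mpow M (idT M m - mprod M A (Z j)) k)) :
    ∀ j, frobNorm (matT M (X - Z (j + 1))) ≤
      frobNorm (matT M X) * frobNorm (matT M A) ^ 19 *
        frobNorm (matT M (X - Z j)) ^ 19 := by
  classical
  set A' := matT M A with hA'
  set X' := matT M X with hX'
  have hout' : X' * (A' * X') = X' := by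
    have h := congrArg (matT M) hout
    rwa [matT_mprod M hM, matT_mprod M hM] at h
  have hZmat : ∀ j, matT M (Z (j + 1)) =
      matT M (Z j) * ∑ k ∈ Finset.range 19, (1 - A' * matT M (Z j)) ^ k := by
    intro j
    rw [hZ j, matT_mprod M hM, matT_sum]
    congr 1
    refine Finset.sum_congr rfl fun k _ => ?_
    rw [matT_mpow M hM, matT_sub, matT_idT M hM, matT_mprod M hM]
  -- invariants: range and kernel inclusions
  have hinv : ∀ j, (∀ v, ∃ w, matT M (Z j) *ᵥ v = X' *ᵥ w) ∧
      (∀ v, X' *ᵥ v = 0 → matT M (Z j) *ᵥ v = 0) := by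
    intro j
    induction j with
    | zero =>
      rw [hZ0, matT_smul]
      constructor
      · intro v
        have hmem : matT M W *ᵥ v ∈ LinearMap.range (matT M X).mulVecLin := by
          rw [show LinearMap.range (matT M X).mulVecLin = rangeM M X from rfl, hRX]
          exact ⟨v, rfl⟩
        obtain ⟨w, hw⟩ := hmem
        refine ⟨γ • w, ?_⟩
        rw [Matrix.smul_mulVec, Matrix.mulVec_smul, ← hw]
        rfl
      · intro v hv
        have hmem : v ∈ kerM M W := by
          rw [← hNX]
          exact hv
        have hz : matT M W *ᵥ v = 0 := hmem
        rw [Matrix.smul_mulVec, hz, smul_zero]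
    | succ j ih =>
      constructor
      · intro v
        rw [hZmat j, ← Matrix.mulVec_mulVec]
        exact ih.1 _
      · intro v hv
        rw [hZmat j, shift_sum, ← Matrix.mulVec_mulVec, ih.2 v hv, Matrix.mulVec_zero]
  -- the two algebraic identities for each j
  have hids : ∀ j, X' * (A' * matT M (Z j)) = matT M (Z j) ∧
      matT M (Z j) * (A' * X') = matT M (Z j) := by
    intro j
    constructor
    · refine eq_of_mulVec_eq fun v => ?_
      obtain ⟨w, hw⟩ := (hinv j).1 v
      rw [← Matrix.mulVec_mulVec, ← Matrix.mulVec_mulVec, hw, Matrix.mulVec_mulVec,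
        Matrix.mulVec_mulVec, Matrix.mul_assoc, hout']
    · refine eq_of_mulVec_eq fun v => ?_
      have hker : X' *ᵥ ((A' * X') *ᵥ v - v) = 0 := by
        rw [Matrix.mulVec_sub, Matrix.mulVec_mulVec, ← Matrix.mul_assoc,
          Matrix.mul_assoc, hout', sub_self]
      have hz := (hinv j).2 _ hker
      rw [Matrix.mulVec_sub] at hz
      have hz' : matT M (Z j) *ᵥ ((A' * X') *ᵥ v) = matT M (Z j) *ᵥ v :=
        sub_eq_zero.mp hz
      rw [← Matrix.mulVec_mulVec, hz']
  -- main error identity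
  have hkey : ∀ j, matT M (X - Z (j + 1)) = X' * (A' * matT M (X - Z j)) ^ 19 := by
    intro j
    rw [matT_sub, matT_sub, hZmat j, ← hX']
    exact key_identity A' X' (matT M (Z j)) hout' (hids j).1 (hids j).2
  -- norm estimate
  intro j
  rw [frobNorm_eq, frobNorm_eq, frobNorm_eq, frobNorm_eq, hkey j]
  set E := matT M (X - Z j)
  calc ‖X' * (A' * E) ^ 19‖ ≤ ‖X'‖ * ‖(A' * E) ^ 19‖ := Matrix.frobenius_norm_mul _ _
    _ ≤ ‖X'‖ * ‖A' * E‖ ^ 19 :=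
        mul_le_mul_of_nonneg_left (pow_norm_le_pow _) (norm_nonneg _)
    _ ≤ ‖X'‖ * (‖A'‖ * ‖E‖) ^ 19 :=
        mul_le_mul_of_nonneg_left
          (pow_le_pow_left₀ (norm_nonneg _) (Matrix.frobenius_norm_mul _ _) 19)
          (norm_nonneg _)
    _ = ‖X'‖ * ‖A'‖ ^ 19 * ‖E‖ ^ 19 := by rw [mul_pow]; ring
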